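/- Let R be a ring, M a free left R-module of rank 2, and (p₀,p₁,p₂,p₃) a harmonic quadruple in P(M). Then p₂ and p₃ are distant if and only if 2 is a unit in R; and p₂ ≠ p₃ if and only if −1 ≠ 1 in R. -/

import Mathlib

/-- Harmonic quadruple of points of the projective line over `M`. -/
def Harm (R M : Type*) [Ring R] [AddCommGroup M] [Module R M]
    (p₀ p₁ p₂ p₃ : Submodule R M) : Prop :=
  ∃ g : Module.Basis (Fin 2) R M,
    p₀ = Submodule.span R {g 0} ∧ p₁ = Submodule.span R {g 1} ∧
    p₂ = Submodule.span R {g 0 + g 1} ∧ p₃ = Submodule.span R {g 0 - g 1}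

/-- For a harmonic quadruple `(p₀,p₁,p₂,p₃)`: the points `p₂`, `p₃` are distant iff
`2` is a unit in `R`, and `p₂ ≠ p₃` iff `-1 ≠ 1` in `R`. -/
theorem harm_last_two (R M : Type*) [Ring R] [AddCommGroup M] [Module R M]
    (p₀ p₁ p₂ p₃ : Submodule R M) (h : Harm R M p₀ p₁ p₂ p₃) :
    (IsCompl p₂ p₃ ↔ IsUnit (2 : R)) ∧ (p₂ ≠ p₃ ↔ (-1 : R) ≠ 1) := by
  obtain ⟨g, h0, h1, h2, h3⟩ := h
  subst h2 h3
  have lin := Fintype.linearIndependent_iff.mp g.linearIndependent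
  have indep : ∀ a b : R, a • g 0 + b • g 1 = 0 → a = 0 ∧ b = 0 := by
    intro a b hab
    have := lin ![a, b] (by simpa [Fin.sum_univ_two] using hab)
    exact ⟨this 0, this 1⟩
  constructor
  · constructor
    · intro hc
      have htop : g 0 ∈ Submodule.span R {g 0 + g 1} ⊔ Submodule.span R {g 0 - g 1} := by
        rw [hc.sup_eq_top]; trivial
      rw [Submodule.mem_sup] at htop
      obtain ⟨y, hy, z, hz, hyz⟩ := htop
      rw [Submodule.mem_span_singleton] at hy hz
      obtain ⟨a, rfl⟩ := hy
      obtain ⟨b, rfl⟩ := hz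
      have key : (a + b - 1) • g 0 + (a - b) • g 1 = 0 := by
        have : a • (g 0 + g 1) + b • (g 0 - g 1) - g 0 = 0 := by rw [hyz]; abel
        rw [← this]
        simp only [smul_add, smul_sub, sub_smul, add_smul, one_smul]
        abel
      obtain ⟨e1, e2⟩ := indep _ _ key
      have hab : a = b := sub_eq_zero.mp e2
      have hsum : a + b = 1 := by
        have := sub_eq_zero.mp e1; simpa using this
      have h2a : 2 * a = 1 := by rw [two_mul]; rw [hab] at hsum ⊢; exact hsum
      have ha2 : a * 2 = 1 := by rw [mul_two]; rw [hab] at hsum ⊢; exact hsum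
      exact ⟨⟨2, a, h2a, ha2⟩, rfl⟩
    · intro h2u
      obtain ⟨u, hu⟩ := h2u
      constructor
      · rw [Submodule.disjoint_def]
        intro x hx hx'
        rw [Submodule.mem_span_singleton] at hx hx'
        obtain ⟨a, rfl⟩ := hx
        obtain ⟨b, hb⟩ := hx'
        have key : (b - a) • g 0 + (-b - a) • g 1 = 0 := by
          have : b • (g 0 - g 1) - a • (g 0 + g 1) = 0 := by rw [hb]; abel
          rw [← this]
          simp only [smul_add, smul_sub, sub_smul, neg_smul]
          abel
        obtain ⟨e1, e2⟩ := indep _ _ key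
        have hba : b = a := sub_eq_zero.mp e1
        have h2a : 2 * a = 0 := by
          rw [hba] at e2
          have hna : -a = a := sub_eq_zero.mp e2
          have : a + a = 0 := by nth_rewrite 1 [← hna]; exact neg_add_cancel a
          rw [two_mul]; exact this
        have ha : a = 0 := by
          calc a = ((↑u⁻¹ : R) * 2) * a := by rw [← hu, u.inv_mul, one_mul]
            _ = (↑u⁻¹ : R) * (2 * a) := by rw [mul_assoc]
            _ = 0 := by rw [h2a, mul_zero]
        rw [ha, zero_smul]
      · rw [codisjoint_iff, eq_top_iff, ← g.span_eq]
        apply Submodule.span_le.mpr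
        rintro _ ⟨i, rfl⟩
        set a : R := (↑u⁻¹ : R)
        have ha2 : a * 2 = 1 := by rw [← hu]; exact u.inv_mul
        rw [SetLike.mem_coe, Submodule.mem_sup]
        fin_cases i
        · refine ⟨a • (g 0 + g 1), Submodule.smul_mem _ _ (Submodule.mem_span_singleton_self _),
            a • (g 0 - g 1), Submodule.smul_mem _ _ (Submodule.mem_span_singleton_self _), ?_⟩
          rw [← smul_add]
          have : (g 0 + g 1) + (g 0 - g 1) = (2 : R) • g 0 := by
            rw [two_smul]; abel
          rw [this, smul_smul, ha2, one_smul]; rfl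
        · refine ⟨a • (g 0 + g 1), Submodule.smul_mem _ _ (Submodule.mem_span_singleton_self _),
            (-a) • (g 0 - g 1), Submodule.smul_mem _ _ (Submodule.mem_span_singleton_self _), ?_⟩
          rw [neg_smul, ← sub_eq_add_neg, ← smul_sub]
          have : (g 0 + g 1) - (g 0 - g 1) = (2 : R) • g 1 := by
            rw [two_smul]; abel
          rw [this, smul_smul, ha2, one_smul]; rfl
  · rw [not_iff_not]
    constructor
    · intro heq
      have hmem : g 0 + g 1 ∈ Submodule.span R {g 0 - g 1} := by
        rw [← heq]; exact Submodule.mem_span_singleton_self _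
      rw [Submodule.mem_span_singleton] at hmem
      obtain ⟨a, ha⟩ := hmem
      have key : (a - 1) • g 0 + (-a - 1) • g 1 = 0 := by
        have : a • (g 0 - g 1) - (g 0 + g 1) = 0 := by rw [ha]; abel
        rw [← this]
        simp only [smul_add, smul_sub, sub_smul, neg_smul, one_smul]
        abel
      obtain ⟨e1, e2⟩ := indep _ _ key
      have ha1 : a = 1 := sub_eq_zero.mp e1
      have : -a = 1 := sub_eq_zero.mp e2
      rw [ha1] at this; exact this
    · intro hneg
      have hgg : -g 1 = g 1 := by
        have : (-1 : R) • g 1 = (1 : R) • g 1 := by rw [hneg]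
        simpa using this
      have : g 0 - g 1 = g 0 + g 1 := by rw [sub_eq_add_neg, hgg]
      rw [this]
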